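/- In a free product G = H ∗ H' of two groups, the factor H is malnormal in G. -/

import Mathlib

open Monoid

namespace MalnormalAux

open Monoid.CoprodI Monoid.CoprodI.Word

variable {ι : Type*} [DecidableEq ι] {G : ι → Type*} [∀ i, Group (G i)]
  [∀ i, DecidableEq (G i)]

/-- The inverse of a reduced word. -/
def wordInv (w : Word G) : Word G where
  toList := w.toList.reverse.map fun l => ⟨l.1, l.2⁻¹⟩
  ne_one := by
    intro l hl
    simp only [List.mem_map, List.mem_reverse] at hl
    obtain ⟨a, ha, rfl⟩ := hl
    exact inv_ne_one.2 (w.ne_one a ha)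
  chain_ne := by
    rw [List.isChain_map, List.isChain_reverse]
    exact w.chain_ne.imp fun a b h => h.symm

theorem prod_wordInv (w : Word G) : (wordInv w).prod = w.prod⁻¹ := by
  simp only [wordInv, Word.prod, List.map_map, List.map_reverse]
  rw [List.prod_reverse_noncomm, List.map_map, inv_inj]
  congr 1
  ext l
  simp

theorem equiv_symm_eq (w : Word G) : Word.equiv.symm w = w.prod := rfl

theorem prod_equiv (g : CoprodI G) : (Word.equiv g).prod = g :=
  Word.equiv.symm_apply_apply g

theorem equiv_prod (w : Word G) : Word.equiv w.prod = w :=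
  Word.equiv.apply_symm_apply w

theorem equiv_inv (g : CoprodI G) : Word.equiv g⁻¹ = wordInv (Word.equiv g) := by
  apply Word.equiv.symm.injective
  simp only [Equiv.symm_apply_apply, equiv_symm_eq, prod_wordInv, prod_equiv]

theorem equiv_mul (x g : CoprodI G) : Word.equiv (x * g) = x • Word.equiv g :=
  mul_smul x g (Word.empty : Word G)

theorem of_smul_eq_cons {i : ι} {a : G i} (ha : a ≠ 1) (w : Word G)
    (hw : Word.fstIdx w ≠ some i) : (of a • w : Word G) = Word.cons a w hw ha := by
  rw [Word.of_smul_def, Word.equivPair_eq_of_fstIdx_ne hw]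
  simp only [mul_one]
  rw [Word.rcons, dif_neg ha]

theorem aux (i : ι) : ∀ (n : ℕ) (g : CoprodI G),
    (Word.equiv g).toList.length ≤ n →
    ∀ a b : G i, a ≠ 1 → g⁻¹ * of a * g = of b →
    g ∈ (of : G i →* CoprodI G).range := by
  intro n
  induction n with
  | zero =>
    intro g hlen a b _ _
    have h0 : (Word.equiv g).toList = [] := List.length_eq_zero_iff.1 (Nat.le_zero.1 hlen)
    have : g = 1 := by
      rw [← prod_equiv g]
      simp [Word.prod, h0]
    rw [this]; exact one_mem _
  | succ n ih =>
    intro g hlen a b ha h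
    rcases hl : (Word.equiv g).toList with _ | ⟨⟨j, c⟩, t⟩
    · have : g = 1 := by
        rw [← prod_equiv g]
        simp [Word.prod, hl]
      rw [this]; exact one_mem _
    set w := Word.equiv g with hwdef
    have hgw : g = w.prod := (prod_equiv g).symm
    by_cases hj : j = i
    · -- first letter is in the factor `G i`: peel it off
      subst hj
      have hchain : t.Chain' fun l l' => l.1 ≠ l'.1 := by
        have := w.chain_ne; rw [hl] at this; exact this.tail
      set w' : Word G := ⟨t, fun l hl' => w.ne_one l
        (by rw [hl]; exact List.mem_cons_of_mem _ hl'), hchain⟩ with hw'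
      have hprod : g = of c * w'.prod := by
        rw [hgw]
        simp [Word.prod, hl, hw']
      have hlen' : (Word.equiv w'.prod).toList.length ≤ n := by
        rw [equiv_prod]
        have h1 : w.toList.length ≤ n + 1 := hlen
        rw [hl] at h1
        simp only [List.length_cons] at h1
        simpa [hw'] using Nat.lt_succ_iff.mp (Nat.lt_succ_of_le h1)
      have ha' : c⁻¹ * a * c ≠ 1 := by
        intro h1
        apply ha
        have := congrArg (fun z => c * z * c⁻¹) h1
        simpa [mul_assoc] using this
      have heq : (w'.prod)⁻¹ * of (c⁻¹ * a * c) * w'.prod = of b := by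
        rw [map_mul, map_mul, map_inv, ← h, hprod]
        group
      have hp := ih w'.prod hlen' _ b ha' heq
      rw [hprod]
      exact mul_mem ⟨c, rfl⟩ hp
    · -- first letter not in `G i`
      have hb1 : b ≠ 1 := by
        rintro rfl
        apply ha
        have h1 : of a = (1 : CoprodI G) := by
          have := congrArg (fun z => g * z * g⁻¹) h
          simpa [mul_assoc, map_one] using this
        exact Monoid.CoprodI.of_injective i (by rw [h1, map_one])
      have hne : w.toList ≠ [] := by rw [hl]; simp
      rcases hlst : w.toList.getLast hne with ⟨k, d⟩
      have hglast : w.toList.getLast? = some (⟨k, d⟩ : Σ i, G i) := by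
        rw [List.getLast?_eq_getLast hne, hlst]
      by_cases hk : k = i
      · -- last letter is in `G i`: peel it off from the right
        subst hk
        have hchain : w.toList.dropLast.Chain' fun l l' => l.1 ≠ l'.1 :=
          w.chain_ne.prefix (List.dropLast_prefix _)
        set w₁ : Word G := ⟨w.toList.dropLast,
          fun l hl' => w.ne_one l (List.mem_of_mem_dropLast hl'), hchain⟩ with hw₁
        have hsplit : w.toList = w.toList.dropLast ++ [⟨k, d⟩] := by
          conv_lhs => rw [← List.dropLast_append_getLast hne]
          rw [hlst]
        have hprod : g = w₁.prod * of d := by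
          rw [hgw]
          conv_lhs => rw [Word.prod, hsplit]
          simp [Word.prod, hw₁]
        have hlen' : (Word.equiv w₁.prod).toList.length ≤ n := by
          rw [equiv_prod]
          have h1 : w.toList.length ≤ n + 1 := hlen
          have h2 : w₁.toList.length = w.toList.length - 1 := by
            simp [hw₁]
          rw [hl] at h1
          simp only [List.length_cons] at h1
          rw [h2, hl]
          simp only [List.length_cons]
          omega
        have heq : (w₁.prod)⁻¹ * of a * w₁.prod = of (d * b * d⁻¹) := by
          rw [map_mul, map_mul, map_inv, ← h, hprod]
          group
        have hp := ih w₁.prod hlen' a (d * b * d⁻¹) ha heq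
        rw [hprod]
        exact mul_mem hp ⟨d, rfl⟩
      · -- contradiction: compare first letters of the words on both sides
        exfalso
        have hfst : Word.fstIdx w ≠ some i := by
          simp [Word.fstIdx, hl, hj]
        have headInv : (wordInv w).toList.head? = some (⟨k, d⁻¹⟩ : Σ i, G i) := by
          simp [wordInv, List.head?_map, List.head?_reverse, hglast]
        have hfstinv : Word.fstIdx (wordInv w) ≠ some i := by
          simp [Word.fstIdx, headInv, hk]
        have hb' : b⁻¹ ≠ 1 := inv_ne_one.2 hb1
        have key1 : Word.equiv (of a * g) = Word.cons a w hfst ha := by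
          rw [equiv_mul, ← hwdef]
          exact of_smul_eq_cons ha w hfst
        have key2 : Word.equiv (of b⁻¹ * g⁻¹)
            = Word.cons b⁻¹ (wordInv w) hfstinv hb' := by
          rw [equiv_mul, equiv_inv, ← hwdef]
          exact of_smul_eq_cons hb' (wordInv w) hfstinv
        have key3 : of b⁻¹ * g⁻¹ = (of a * g)⁻¹ := by
          rw [map_inv, ← h]; group
        have E : Word.cons b⁻¹ (wordInv w) hfstinv hb'
            = wordInv (Word.cons a w hfst ha) :=
          key2.symm.trans ((congrArg Word.equiv key3).trans
            ((equiv_inv (of a * g)).trans (congrArg wordInv key1)))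
        have hL : (Word.cons b⁻¹ (wordInv w) hfstinv hb').toList.head?
            = some (⟨i, b⁻¹⟩ : Σ i, G i) := by
          simp [Word.cons]
        have hR : (wordInv (Word.cons a w hfst ha)).toList.head?
            = some (⟨k, d⁻¹⟩ : Σ i, G i) := by
          simp only [wordInv, Word.cons]
          rw [List.head?_map, List.head?_reverse, hl, List.getLast?_cons_cons, ← hl, hglast]
          rfl
        have E' : some (⟨i, b⁻¹⟩ : Σ i, G i) = some (⟨k, d⁻¹⟩ : Σ i, G i) := by
          rw [← hL, ← hR, E]
        simp only [Option.some.injEq] at E'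
        exact hk (congrArg Sigma.fst E').symm

theorem conj_mem_range {i : ι} {g x : CoprodI G}
    (hg : g ∉ (of : G i →* CoprodI G).range)
    (hx : x ∈ (of : G i →* CoprodI G).range)
    (hconj : g⁻¹ * x * g ∈ (of : G i →* CoprodI G).range) : x = 1 := by
  obtain ⟨a, rfl⟩ := hx
  obtain ⟨b, hb⟩ := hconj
  by_cases ha : a = 1
  · rw [ha, map_one]
  · exact absurd (aux i (Word.equiv g).toList.length g le_rfl a b ha hb.symm) hg

end MalnormalAux

section Transfer

universe u v

variable (H : Type u) (H' : Type v) [Group H] [Group H']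

/-- The two factors of a binary free product, as a `Bool`-indexed family. -/
abbrev Fac : Bool → Type (max u v) := fun b => cond b (ULift.{v} H) (ULift.{u} H')

instance : ∀ b, Group (Fac H H' b) := fun b => by cases b <;> dsimp [Fac] <;> infer_instance

/-- The canonical map `CoprodI (Fac H H') →* Coprod H H'`. -/
def psi : Monoid.CoprodI (Fac H H') →* Monoid.Coprod H H' :=
  Monoid.CoprodI.lift fun b => match b with
    | true => (Monoid.Coprod.inl : H →* Monoid.Coprod H H').comp
        (MulEquiv.ulift : ULift H ≃* H).toMonoidHom
    | false => (Monoid.Coprod.inr : H' →* Monoid.Coprod H H').comp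
        (MulEquiv.ulift : ULift H' ≃* H').toMonoidHom

/-- The canonical map `Coprod H H' →* CoprodI (Fac H H')`. -/
def phi : Monoid.Coprod H H' →* Monoid.CoprodI (Fac H H') :=
  Monoid.Coprod.lift
    ((Monoid.CoprodI.of (i := true)).comp
      ((MulEquiv.ulift : ULift H ≃* H).symm.toMonoidHom))
    ((Monoid.CoprodI.of (i := false)).comp
      ((MulEquiv.ulift : ULift H' ≃* H').symm.toMonoidHom))

theorem phi_inl (h : H) :
    phi H H' (Monoid.Coprod.inl h) = Monoid.CoprodI.of (i := true) (ULift.up h) := rfl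

theorem phi_inr (h : H') :
    phi H H' (Monoid.Coprod.inr h) = Monoid.CoprodI.of (i := false) (ULift.up h) := rfl

theorem psi_of_true (h : ULift.{v} H) :
    psi H H' (Monoid.CoprodI.of (i := true) h) = Monoid.Coprod.inl h.down := by
  rw [psi, Monoid.CoprodI.lift_of]
  rfl

theorem psi_of_false (h : ULift.{u} H') :
    psi H H' (Monoid.CoprodI.of (i := false) h) = Monoid.Coprod.inr h.down := by
  rw [psi, Monoid.CoprodI.lift_of]
  rfl

theorem psi_phi (x : Monoid.Coprod H H') : psi H H' (phi H H' x) = x := by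
  have : (psi H H').comp (phi H H') = MonoidHom.id _ := by
    apply Monoid.Coprod.hom_ext <;> ext y <;>
      simp only [MonoidHom.comp_apply, MonoidHom.id_comp, MonoidHom.id_apply,
        phi_inl, phi_inr, psi_of_true, psi_of_false]
  exact DFunLike.congr_fun this x

end Transfer

def IsMalnormal {G : Type*} [Group G] (H : Subgroup G) : Prop :=
  ∀ g : G, g ∉ H → ∀ x : G, x ∈ H → g⁻¹ * x * g ∈ H → x = 1

theorem malnormal_free_product_factor (H H' : Type*) [Group H] [Group H'] :
    IsMalnormal ((Monoid.Coprod.inl : H →* Monoid.Coprod H H').range) := by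
  classical
  intro g hg x hx hconj
  letI : ∀ b, DecidableEq (Fac H H' b) := fun b => Classical.decEq _
  have key : ∀ y : Monoid.Coprod H H', y ∈ (Monoid.Coprod.inl : H →* _).range →
      phi H H' y ∈ (Monoid.CoprodI.of : Fac H H' true →* _).range := by
    rintro y ⟨h, rfl⟩
    exact ⟨ULift.up h, (phi_inl H H' h).symm⟩
  have hφg : phi H H' g ∉ (Monoid.CoprodI.of : Fac H H' true →* _).range := by
    rintro ⟨h, hh⟩
    apply hg
    refine ⟨h.down, ?_⟩
    have h2 := congrArg (psi H H') hh
    rw [psi_phi, psi_of_true] at h2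
    exact h2
  have hφconj : (phi H H' g)⁻¹ * phi H H' x * phi H H' g ∈
      (Monoid.CoprodI.of : Fac H H' true →* _).range := by
    have h2 := key _ hconj
    simpa [map_mul, map_inv] using h2
  have hφx := key _ hx
  have h3 : phi H H' x = 1 :=
    @MalnormalAux.conj_mem_range Bool instDecidableEqBool (Fac H H') _ (fun b => Classical.decEq _) true _ _ hφg hφx hφconj
  have h4 := congrArg (psi H H') h3
  rw [psi_phi] at h4
  simpa using h4
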